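/- arXiv:1602.01254 — 3 statements merged into one kernel-verified Lean document; each statement's English description precedes it below -/
import Mathlib

section
/- Let x : ℕ → ℝ be a data sequence and, for integers u < v, define the empirical CDF of the segment x_{u+1:v} at t ∈ ℝ by F̂_{u,v}(t) = (1/(v−u))·Σ_{j=u+1}^{v} (1{x_j < t} + (1/2)·1{x_j = t}), and define the nonparametric log-likelihood of the segment at t by ℒ(u,v;t) = (v−u)·(F̂_{u,v}(t)·log F̂_{u,v}(t) + (1−F̂_{u,v}(t))·log(1−F̂_{u,v}(t))), with the convention 0·log 0 = 0. Then for all integers u < v < T and all t ∈ ℝ, ℒ(u,T;t) ≤ ℒ(u,v;t) + ℒ(v,T;t). -/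
open Finset

noncomputable def ecdf (x : ℕ → ℝ) (u v : ℕ) (t : ℝ) : ℝ :=
  (1 / ((v : ℝ) - (u : ℝ))) *
    ∑ j ∈ Finset.Ioc u v,
      ((if x j < t then (1 : ℝ) else 0) + (1 / 2) * (if x j = t then (1 : ℝ) else 0))

noncomputable def npll (x : ℕ → ℝ) (u v : ℕ) (t : ℝ) : ℝ :=
  ((v : ℝ) - (u : ℝ)) *
    (ecdf x u v t * Real.log (ecdf x u v t) +
      (1 - ecdf x u v t) * Real.log (1 - ecdf x u v t))

noncomputable def gEnt (p : ℝ) : ℝ := p * Real.log p + (1 - p) * Real.log (1 - p)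

lemma gEnt_convex : ConvexOn ℝ (Set.Icc (0:ℝ) 1) gEnt := by
  have h1 : ConvexOn ℝ (Set.Icc (0:ℝ) 1) (fun p => p * Real.log p) :=
    Real.convexOn_mul_log.subset (fun p hp => hp.1) (convex_Icc 0 1)
  have h2 : ConvexOn ℝ (Set.Icc (0:ℝ) 1) (fun p => (1 - p) * Real.log (1 - p)) := by
    have h0 := Real.convexOn_mul_log.comp_affineMap (AffineMap.lineMap (1:ℝ) (0:ℝ))
    have he : ((fun x => x * Real.log x) ∘ ⇑(AffineMap.lineMap (1:ℝ) (0:ℝ)))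
        = fun p => (1 - p) * Real.log (1 - p) := by
      funext p
      simp [AffineMap.lineMap_apply]
      ring_nf
    rw [he] at h0
    refine h0.subset (fun p hp => ?_) (convex_Icc 0 1)
    simp only [Set.mem_preimage, AffineMap.lineMap_apply, Set.mem_Ici, smul_eq_mul]
    simp only [Set.mem_Icc] at hp
    simp only [vsub_eq_sub, vadd_eq_add, smul_eq_mul]
    nlinarith [hp.2]
  exact h1.add h2

lemma key (a b p q : ℝ) (ha : 0 < a) (hb : 0 < b)
    (hp : p ∈ Set.Icc (0:ℝ) 1) (hq : q ∈ Set.Icc (0:ℝ) 1) :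
    (a + b) * gEnt ((a * p + b * q) / (a + b)) ≤ a * gEnt p + b * gEnt q := by
  have hab : 0 < a + b := by linarith
  have h := gEnt_convex.2 hp hq (le_of_lt (div_pos ha hab)) (le_of_lt (div_pos hb hab))
    (by field_simp)
  simp only [smul_eq_mul] at h
  have harg : a / (a + b) * p + b / (a + b) * q = (a * p + b * q) / (a + b) := by
    rw [div_mul_eq_mul_div, div_mul_eq_mul_div, ← add_div]
  rw [harg] at h
  have h2 := mul_le_mul_of_nonneg_left h (le_of_lt hab)
  calc (a + b) * gEnt ((a * p + b * q) / (a + b))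
      ≤ (a + b) * (a / (a + b) * gEnt p + b / (a + b) * gEnt q) := h2
    _ = a * gEnt p + b * gEnt q := by field_simp

lemma term_mem (y t : ℝ) :
    ((if y < t then (1 : ℝ) else 0) + (1 / 2) * (if y = t then (1 : ℝ) else 0)) ∈ Set.Icc (0:ℝ) 1 := by
  rcases lt_trichotomy y t with h | h | h
  · simp [h, ne_of_lt h]
  · subst h; norm_num
  · simp [not_lt.2 (le_of_lt h), ne_of_gt h]

lemma ecdf_mem (x : ℕ → ℝ) (u v : ℕ) (huv : u < v) (t : ℝ) :
    ecdf x u v t ∈ Set.Icc (0:ℝ) 1 := by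
  have huv' : (u:ℝ) < v := by exact_mod_cast huv
  have hn : (0:ℝ) < (v : ℝ) - u := by linarith
  have hS0 : (0:ℝ) ≤ ∑ j ∈ Finset.Ioc u v,
      ((if x j < t then (1 : ℝ) else 0) + (1 / 2) * (if x j = t then (1 : ℝ) else 0)) :=
    Finset.sum_nonneg (fun j _ => (term_mem (x j) t).1)
  have hS1 : (∑ j ∈ Finset.Ioc u v,
      ((if x j < t then (1 : ℝ) else 0) + (1 / 2) * (if x j = t then (1 : ℝ) else 0)))
      ≤ (v : ℝ) - u := by
    calc _ ≤ ∑ _j ∈ Finset.Ioc u v, (1:ℝ) :=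
          Finset.sum_le_sum (fun j _ => (term_mem (x j) t).2)
      _ = ((v - u : ℕ) : ℝ) := by simp [Nat.card_Ioc]
      _ = (v : ℝ) - u := by
          push_cast [Nat.cast_sub (le_of_lt huv)]; ring
  constructor
  · exact mul_nonneg (by positivity) hS0
  · rw [ecdf, one_div, inv_mul_le_iff₀ hn, mul_one]
    exact hS1

/-- Superadditivity of minus the nonparametric log-likelihood:
for `u < v < T` and any `t`, `ℒ(u,T;t) ≤ ℒ(u,v;t) + ℒ(v,T;t)`. -/
theorem npll_superadditive (x : ℕ → ℝ) (u v T : ℕ) (huv : u < v) (hvT : v < T)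
    (t : ℝ) :
    npll x u T t ≤ npll x u v t + npll x v T t := by
  have huv' : (u:ℝ) < v := by exact_mod_cast huv
  have hvT' : (v:ℝ) < T := by exact_mod_cast hvT
  set a : ℝ := (v:ℝ) - u with hadef
  set b : ℝ := (T:ℝ) - v with hbdef
  have ha : 0 < a := by simp [hadef]; linarith
  have hb : 0 < b := by simp [hbdef]; linarith
  set p := ecdf x u v t with hpdef
  set q := ecdf x v T t with hqdef
  have hsplit : ecdf x u T t = (a * p + b * q) / (a + b) := by
    have hsum : (∑ j ∈ Finset.Ioc u T,
        ((if x j < t then (1 : ℝ) else 0) + (1 / 2) * (if x j = t then (1 : ℝ) else 0)))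
        = (∑ j ∈ Finset.Ioc u v,
            ((if x j < t then (1 : ℝ) else 0) + (1 / 2) * (if x j = t then (1 : ℝ) else 0)))
          + (∑ j ∈ Finset.Ioc v T,
            ((if x j < t then (1 : ℝ) else 0) + (1 / 2) * (if x j = t then (1 : ℝ) else 0))) :=
      (Finset.sum_Ioc_consecutive _ (le_of_lt huv) (le_of_lt hvT)).symm
    have hap : a * p = ∑ j ∈ Finset.Ioc u v,
        ((if x j < t then (1 : ℝ) else 0) + (1 / 2) * (if x j = t then (1 : ℝ) else 0)) := by
      rw [hpdef, ecdf, ← hadef, ← mul_assoc, mul_one_div, div_self (ne_of_gt ha), one_mul]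
    have hbq : b * q = ∑ j ∈ Finset.Ioc v T,
        ((if x j < t then (1 : ℝ) else 0) + (1 / 2) * (if x j = t then (1 : ℝ) else 0)) := by
      rw [hqdef, ecdf, ← hbdef, ← mul_assoc, mul_one_div, div_self (ne_of_gt hb), one_mul]
    rw [ecdf, hsum, ← hap, ← hbq]
    have hTu : (T:ℝ) - u = a + b := by rw [hadef, hbdef]; ring
    rw [hTu, one_div, inv_mul_eq_div]
  have hgoal1 : npll x u T t = (a + b) * gEnt ((a * p + b * q) / (a + b)) := by
    rw [npll, gEnt, ← hsplit]
    have hTu : (T:ℝ) - u = a + b := by rw [hadef, hbdef]; ring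
    rw [hTu]
  have hgoal2 : npll x u v t = a * gEnt p := by rw [npll, gEnt, hadef, hpdef]
  have hgoal3 : npll x v T t = b * gEnt q := by rw [npll, gEnt, hbdef, hqdef]
  rw [hgoal1, hgoal2, hgoal3]
  exact key a b p q ha hb (ecdf_mem x u v huv t) (ecdf_mem x v T hvT t)
end

section
/- Let C : ℕ → ℕ → ℝ be a segment cost function that is superadditive in the sense that C(u,T) ≥ C(u,v) + C(v,T) for all integers u < v < T, and let ξ ∈ ℝ be a penalty. For v ≥ 1 define Q(v) as the minimum, over all integers m ≥ 0 and all changepoint vectors 0 = τ₀ < τ₁ < ⋯ < τ_m < τ_{m+1} = v, of Σ_{i=1}^{m+1} (C(τ_{i−1}, τ_i) + ξ). Suppose that at time v there exists u < v with Q(u) + C(u,v) ≥ Q(v). Then for every T > v, Q(u) + C(u,T) + ξ ≥ Q(v) + C(v,T) + ξ; in particular, u can never be the optimal location of the last changepoint prior to any time T > v. -/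
open Finset

/-- The set of penalised costs of all segmentations of the first `v` data points:
costs `Σ_{i=1}^{m+1} (C(τ_{i−1}, τ_i) + ξ)` over all `m ≥ 0` and all changepoint
vectors `0 = τ₀ < τ₁ < ⋯ < τ_m < τ_{m+1} = v`. -/
def segmentationCosts (C : ℕ → ℕ → ℝ) (ξ : ℝ) (v : ℕ) : Set ℝ :=
  {s | ∃ (m : ℕ) (τ : ℕ → ℕ), τ 0 = 0 ∧ τ (m + 1) = v ∧
        (∀ i ≤ m, τ i < τ (i + 1)) ∧
        s = ∑ i ∈ Finset.range (m + 1), (C (τ i) (τ (i + 1)) + ξ)}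

/-- `Q v` is the optimal penalised segmentation cost of the first `v` data points
(for `v ≥ 1`), with `Q 0 = 0`. -/
noncomputable def Qopt (C : ℕ → ℕ → ℝ) (ξ : ℝ) : ℕ → ℝ
  | 0 => 0
  | v + 1 => sInf (segmentationCosts C ξ (v + 1))

/-- The PELT pruning theorem (Theorem 1 of the paper): if the segment cost `C` is
superadditive, i.e. `C(u,T) ≥ C(u,v) + C(v,T)` for all `u < v < T`, and at time `v`
there exists `u < v` with `Q(u) + C(u,v) ≥ Q(v)`, then for every future time `T > v`
we have `Q(u) + C(u,T) + ξ ≥ Q(v) + C(v,T) + ξ`; in particular `u` can never be the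
optimal location of the last changepoint prior to `T`. -/
theorem pelt_pruning (C : ℕ → ℕ → ℝ) (ξ : ℝ)
    (hC : ∀ u v T : ℕ, u < v → v < T → C u v + C v T ≤ C u T)
    (u v : ℕ) (huv : u < v)
    (hprune : Qopt C ξ v ≤ Qopt C ξ u + C u v) :
    ∀ T : ℕ, v < T →
      Qopt C ξ v + C v T + ξ ≤ Qopt C ξ u + C u T + ξ := by
  intro T hT
  have := hC u v T huv hT
  linarith
end

section
/- Let C : ℕ → ℕ → ℝ be a segment cost function and let ξ ∈ ℝ be a penalty. For v ≥ 1 define Q(v) as the minimum, over all integers m ≥ 0 and all changepoint vectors 0 = τ₀ < τ₁ < ⋯ < τ_m < τ_{m+1} = v, of Σ_{i=1}^{m+1} (C(τ_{i−1}, τ_i) + ξ), and set Q(0) = 0. Then Q satisfies the dynamic programming recursion Q(v) = min_{0 ≤ u < v} ( Q(u) + C(u,v) + ξ ) for every v ≥ 1. -/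
open Finset

lemma segCosts_tau_bound {m : ℕ} {τ : ℕ → ℕ}
    (hlt : ∀ i ≤ m, τ i < τ (i + 1)) :
    ∀ j ≤ m + 1, ∀ i ≤ j, τ i + (j - i) ≤ τ j := by
  intro j hj
  induction j with
  | zero => intro i hi; interval_cases i; simp
  | succ n ih =>
    intro i hi
    rcases Nat.lt_or_ge i (n + 1) with h | h
    · have h1 := ih (by omega) i (by omega)
      have h2 := hlt n (by omega)
      omega
    · have : i = n + 1 := by omega
      subst this; simp

lemma segCosts_bddBelow (C : ℕ → ℕ → ℝ) (ξ : ℝ) (w : ℕ) :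
    BddBelow (segmentationCosts C ξ w) := by
  classical
  set M : ℝ := ((Finset.range (w + 1)) ×ˢ (Finset.range (w + 1))).sup'
      (by simp) (fun p => |C p.1 p.2 + ξ|) with hM
  have hM0 : 0 ≤ M := by
    have hmem00 : ((0, 0) : ℕ × ℕ) ∈ (Finset.range (w + 1)) ×ˢ (Finset.range (w + 1)) := by
      simp [Finset.mem_product]
    have : |C 0 0 + ξ| ≤ M := Finset.le_sup' (fun p : ℕ × ℕ => |C p.1 p.2 + ξ|) hmem00
    have := abs_nonneg (C 0 0 + ξ)
    linarith
  refine ⟨-((w : ℝ) * M), ?_⟩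
  rintro s ⟨m, τ, h0, hend, hlt, rfl⟩
  have key := segCosts_tau_bound hlt
  have hmw : m + 1 ≤ w := by
    have := key (m + 1) le_rfl 0 (by omega); omega
  have hτw : ∀ i ≤ m + 1, τ i ≤ w := by
    intro i hi
    have := key (m + 1) le_rfl i hi; omega
  have hterm : ∀ i ∈ Finset.range (m + 1), -M ≤ C (τ i) (τ (i + 1)) + ξ := by
    intro i hi
    simp only [Finset.mem_range] at hi
    have h1 : τ i ≤ w := hτw i (by omega)
    have h2 : τ (i + 1) ≤ w := hτw (i + 1) (by omega)
    have hmem : (τ i, τ (i + 1)) ∈ (Finset.range (w + 1)) ×ˢ (Finset.range (w + 1)) := by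
      simp only [Finset.mem_product, Finset.mem_range]; omega
    have hle : |C (τ i) (τ (i + 1)) + ξ| ≤ M :=
      Finset.le_sup' (fun p => |C p.1 p.2 + ξ|) hmem
    have := neg_abs_le (C (τ i) (τ (i + 1)) + ξ)
    linarith
  have hsum : ∑ i ∈ Finset.range (m + 1), (-M) ≤
      ∑ i ∈ Finset.range (m + 1), (C (τ i) (τ (i + 1)) + ξ) :=
    Finset.sum_le_sum hterm
  have hconst : ∑ i ∈ Finset.range (m + 1), (-M) = -(((m : ℝ) + 1) * M) := by
    simp [Finset.sum_const, Finset.card_range]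
  have hmw' : ((m : ℝ) + 1) ≤ (w : ℝ) := by exact_mod_cast hmw
  nlinarith

lemma segCosts_nonempty (C : ℕ → ℕ → ℝ) (ξ : ℝ) {v : ℕ} (hv : 1 ≤ v) :
    (segmentationCosts C ξ v).Nonempty := by
  refine ⟨C 0 v + ξ, 0, fun i => if i = 0 then 0 else v, by simp, by simp, ?_, by simp⟩
  intro i hi
  interval_cases i
  exact hv

lemma segCosts_extend (C : ℕ → ℕ → ℝ) (ξ : ℝ) {u v : ℕ} {s : ℝ}
    (hs : s ∈ segmentationCosts C ξ u) (huv : u < v) :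
    s + (C u v + ξ) ∈ segmentationCosts C ξ v := by
  classical
  obtain ⟨m, τ, h0, hend, hlt, rfl⟩ := hs
  set τ' : ℕ → ℕ := fun i => if i = m + 2 then v else τ i with hτ'
  have he : ∀ i, i ≤ m + 1 → τ' i = τ i := by
    intro i hi
    simp only [hτ']
    rw [if_neg (by omega)]
  have he2 : τ' (m + 2) = v := by simp [hτ']
  refine ⟨m + 1, τ', by rw [he 0 (by omega), h0], he2, ?_, ?_⟩
  · intro i hi
    rcases Nat.lt_or_ge i (m + 1) with h | h
    · rw [he i (by omega), he (i + 1) (by omega)]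
      exact hlt i (by omega)
    · have hie : i = m + 1 := by omega
      subst hie
      rw [he (m + 1) le_rfl, hend]
      calc u < v := huv
        _ = τ' (m + 2) := he2.symm
  · have hsum : ∑ i ∈ Finset.range (m + 1), (C (τ' i) (τ' (i + 1)) + ξ) =
        ∑ i ∈ Finset.range (m + 1), (C (τ i) (τ (i + 1)) + ξ) := by
      apply Finset.sum_congr rfl
      intro i hi
      simp only [Finset.mem_range] at hi
      rw [he i (by omega), he (i + 1) (by omega)]
    rw [Finset.sum_range_succ (n := m + 1), hsum, he (m + 1) le_rfl, he2, hend]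

lemma Qopt_eq_sInf (C : ℕ → ℕ → ℝ) (ξ : ℝ) {v : ℕ} (hv : 1 ≤ v) :
    Qopt C ξ v = sInf (segmentationCosts C ξ v) := by
  cases v with
  | zero => omega
  | succ n => rfl

/-- The Optimal Partitioning / PELT dynamic programming recursion:
`Q(v) = min_{0 ≤ u < v} ( Q(u) + C(u,v) + ξ )` for every `v ≥ 1`. -/
theorem Qopt_recursion (C : ℕ → ℕ → ℝ) (ξ : ℝ) (v : ℕ) (hv : 1 ≤ v) :
    Qopt C ξ v =
      (Finset.range v).inf' (Finset.nonempty_range_iff.mpr (by omega))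
        (fun u => Qopt C ξ u + C u v + ξ) := by
  rw [Qopt_eq_sInf C ξ hv]
  apply le_antisymm
  · apply Finset.le_inf'
    intro u hu
    simp only [Finset.mem_range] at hu
    rcases Nat.eq_zero_or_pos u with rfl | hu1
    · -- u = 0
      have hmem : C 0 v + ξ ∈ segmentationCosts C ξ v := by
        refine ⟨0, fun i => if i = 0 then 0 else v, by simp, by simp, ?_, by simp⟩
        intro i hi; interval_cases i; simp; omega
      have h := csInf_le (segCosts_bddBelow C ξ v) hmem
      have hq0 : Qopt C ξ 0 = 0 := rfl
      rw [hq0]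
      linarith
    · -- u ≥ 1
      rw [Qopt_eq_sInf C ξ hu1]
      have h1 : sInf (segmentationCosts C ξ v) - (C u v + ξ) ≤
          sInf (segmentationCosts C ξ u) := by
        apply le_csInf (segCosts_nonempty C ξ hu1)
        intro s hs
        have := csInf_le (segCosts_bddBelow C ξ v) (segCosts_extend C ξ hs hu)
        linarith
      linarith
  · apply le_csInf (segCosts_nonempty C ξ hv)
    rintro s ⟨m, τ, h0, hend, hlt, rfl⟩
    cases m with
    | zero =>
      have h0mem : (0 : ℕ) ∈ Finset.range v := Finset.mem_range.mpr (by omega)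
      refine le_trans (Finset.inf'_le _ h0mem) ?_
      have hq0 : Qopt C ξ 0 = 0 := rfl
      rw [Finset.sum_range_one, h0, hend, hq0]
      linarith
    | succ m' =>
      have huv : τ (m' + 1) < v := by
        have := hlt (m' + 1) le_rfl
        omega
      have hu1 : 1 ≤ τ (m' + 1) := by
        have := hlt m' (by omega)
        omega
      have humem : τ (m' + 1) ∈ Finset.range v := Finset.mem_range.mpr huv
      have hprefix : (∑ i ∈ Finset.range (m' + 1), (C (τ i) (τ (i + 1)) + ξ)) ∈
          segmentationCosts C ξ (τ (m' + 1)) :=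
        ⟨m', τ, h0, rfl, fun i hi => hlt i (by omega), rfl⟩
      have h1 : Qopt C ξ (τ (m' + 1)) ≤
          ∑ i ∈ Finset.range (m' + 1), (C (τ i) (τ (i + 1)) + ξ) := by
        rw [Qopt_eq_sInf C ξ hu1]
        exact csInf_le (segCosts_bddBelow C ξ _) hprefix
      refine le_trans (Finset.inf'_le _ humem) ?_
      rw [Finset.sum_range_succ, hend]
      linarith
end
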